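/- The functions g₁(t) = 1/(12 + t²α)², g₂(t) = 1/(t(12 + t²α)²), g₃(t) = 1/(t²(12 + t²α)²), with α > 0 constant, form a fundamental system of solutions on (0,∞) of the third order linear ODE g''' + (18(t²α + 4)/(t(12 + t²α))) g'' + (18(5t⁴α² + 48t²α + 48)/(t²(12 + t²α)²)) g' + (24α(5t²α + 24)/(t(12 + t²α)²)) g = 0. -/

import Mathlib

open Set

/-- Auxiliary: a function with zero derivative on `(0,∞)` is constant there. -/
lemma eqOn_const_aux (f : ℝ → ℝ) (hf : ∀ t ∈ Set.Ioi (0:ℝ), HasDerivAt f 0 t) :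
    ∀ x ∈ Set.Ioi (0:ℝ), f x = f 1 := by
  have key : ∀ a b : ℝ, 0 < a → a ≤ b → f b = f a := by
    intro a b ha hab
    have hc : ContinuousOn f (Icc a b) := fun z hz =>
      ((hf z (lt_of_lt_of_le ha hz.1)).continuousAt).continuousWithinAt
    exact constant_of_has_deriv_right_zero hc
      (fun z hz => ((hf z (lt_of_lt_of_le ha hz.1)).hasDerivWithinAt)) b (right_mem_Icc.2 hab)
  intro x hx
  rcases le_total 1 x with h | h
  · exact key 1 x one_pos h
  · exact (key x 1 hx h).symm

/-- The third order ODE predicate: `g` (with given first, second and third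
derivative functions) solves the second symmetric power equation on `(0,∞)`. -/
def SolvesThirdOrderODE (α : ℝ) (g g' g'' g''' : ℝ → ℝ) : Prop :=
  (∀ t ∈ Set.Ioi (0:ℝ), HasDerivAt g (g' t) t) ∧
  (∀ t ∈ Set.Ioi (0:ℝ), HasDerivAt g' (g'' t) t) ∧
  (∀ t ∈ Set.Ioi (0:ℝ), HasDerivAt g'' (g''' t) t) ∧
  (∀ t ∈ Set.Ioi (0:ℝ),
    g''' t + (18 * (t ^ 2 * α + 4) / (t * (12 + t ^ 2 * α))) * g'' t
      + (18 * (5 * t ^ 4 * α ^ 2 + 48 * t ^ 2 * α + 48) /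
          (t ^ 2 * (12 + t ^ 2 * α) ^ 2)) * g' t
      + (24 * α * (5 * t ^ 2 * α + 24) / (t * (12 + t ^ 2 * α) ^ 2)) * g t = 0)

set_option maxHeartbeats 1000000 in
theorem fundamental_system_third_order (α : ℝ) (hα : 0 < α) :
    -- each of g₁, g₂, g₃ solves the ODE
    (∃ g₁' g₁'' g₁''', SolvesThirdOrderODE α
      (fun t => 1 / (12 + t ^ 2 * α) ^ 2) g₁' g₁'' g₁''') ∧
    (∃ g₂' g₂'' g₂''', SolvesThirdOrderODE α
      (fun t => 1 / (t * (12 + t ^ 2 * α) ^ 2)) g₂' g₂'' g₂''') ∧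
    (∃ g₃' g₃'' g₃''', SolvesThirdOrderODE α
      (fun t => 1 / (t ^ 2 * (12 + t ^ 2 * α) ^ 2)) g₃' g₃'' g₃''') ∧
    -- they are linearly independent on (0,∞)
    (∀ c₁ c₂ c₃ : ℝ,
      (∀ t ∈ Set.Ioi (0:ℝ),
        c₁ * (1 / (12 + t ^ 2 * α) ^ 2) + c₂ * (1 / (t * (12 + t ^ 2 * α) ^ 2))
          + c₃ * (1 / (t ^ 2 * (12 + t ^ 2 * α) ^ 2)) = 0) →
      c₁ = 0 ∧ c₂ = 0 ∧ c₃ = 0) ∧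
    -- they span the solution space
    (∀ g g' g'' g''' : ℝ → ℝ, SolvesThirdOrderODE α g g' g'' g''' →
      ∃ c₁ c₂ c₃ : ℝ, ∀ t ∈ Set.Ioi (0:ℝ),
        g t = c₁ * (1 / (12 + t ^ 2 * α) ^ 2) + c₂ * (1 / (t * (12 + t ^ 2 * α) ^ 2))
          + c₃ * (1 / (t ^ 2 * (12 + t ^ 2 * α) ^ 2))) := by
  have hq : ∀ t : ℝ, HasDerivAt (fun s : ℝ => 12 + s^2*α) (2*t*α) t := fun t =>
    (((hasDerivAt_pow 2 t).mul_const α).const_add 12).congr_deriv (by push_cast; ring)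
  refine ⟨?_, ?_, ?_, ?_, ?_⟩
  · -- g₁ solves
    refine ⟨fun t => (-(4*α*t)) / (12+t^2*α)^3,
      fun t => (20*α^2*t^2 - 48*α) / (12+t^2*α)^4,
      fun t => (864*α^2*t - 120*α^3*t^3) / (12+t^2*α)^5, ?_, ?_, ?_, ?_⟩ <;>
      intro t ht <;>
      have ht0 : (0:ℝ) < t := ht <;>
      have htne : t ≠ 0 := ne_of_gt ht0 <;>
      have hw : (12 + t^2*α) ≠ 0 := by positivity
    · exact ((hasDerivAt_const t (1:ℝ)).div ((hq t).pow 2) (pow_ne_zero 2 hw)).congr_deriv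
        (by simp only [Pi.pow_apply, Pi.mul_apply, Pi.neg_apply, Pi.add_apply, id]; field_simp; ring)
    · exact ((((hasDerivAt_id t).const_mul (4*α)).neg).div ((hq t).pow 3)
        (pow_ne_zero 3 hw)).congr_deriv (by simp only [Pi.pow_apply, Pi.mul_apply, Pi.neg_apply, Pi.add_apply, id]; field_simp; ring)
    · exact ((((hasDerivAt_pow 2 t).const_mul (20*α^2)).sub_const (48*α)).div ((hq t).pow 4)
        (pow_ne_zero 4 hw)).congr_deriv (by simp only [Pi.pow_apply, Pi.mul_apply, Pi.neg_apply, Pi.add_apply, id]; field_simp; ring)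
    · field_simp
      ring
  · -- g₂ solves
    refine ⟨fun t => (-(5*α*t^2 + 12)) / (t^2*(12+t^2*α)^3),
      fun t => (30*α^2*t^4 + 96*α*t^2 + 288) / (t^3*(12+t^2*α)^4),
      fun t => (-(210*α^3*t^6 + 504*α^2*t^4 + 4320*α*t^2 + 10368)) / (t^4*(12+t^2*α)^5),
      ?_, ?_, ?_, ?_⟩ <;>
      intro t ht <;>
      have ht0 : (0:ℝ) < t := ht <;>
      have htne : t ≠ 0 := ne_of_gt ht0 <;>
      have hw : (12 + t^2*α) ≠ 0 := by positivity
    · exact ((hasDerivAt_const t (1:ℝ)).div ((hasDerivAt_id t).mul ((hq t).pow 2))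
        (mul_ne_zero htne (pow_ne_zero 2 hw))).congr_deriv (by simp only [Pi.pow_apply, Pi.mul_apply, Pi.neg_apply, Pi.add_apply, id]; field_simp; ring)
    · exact (((((hasDerivAt_pow 2 t).const_mul (5*α)).add_const 12).neg).div
        ((hasDerivAt_pow 2 t).mul ((hq t).pow 3))
        (mul_ne_zero (pow_ne_zero 2 htne) (pow_ne_zero 3 hw))).congr_deriv
        (by simp only [Pi.pow_apply, Pi.mul_apply, Pi.neg_apply, Pi.add_apply, id]; field_simp; ring)
    · exact (((((hasDerivAt_pow 4 t).const_mul (30*α^2)).add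
        ((hasDerivAt_pow 2 t).const_mul (96*α))).add_const 288).div
        ((hasDerivAt_pow 3 t).mul ((hq t).pow 4))
        (mul_ne_zero (pow_ne_zero 3 htne) (pow_ne_zero 4 hw))).congr_deriv
        (by simp only [Pi.pow_apply, Pi.mul_apply, Pi.neg_apply, Pi.add_apply, id]; field_simp; ring)
    · field_simp
      ring
  · -- g₃ solves
    refine ⟨fun t => (-(6*α*t^2 + 24)) / (t^3*(12+t^2*α)^3),
      fun t => (42*α^2*t^4 + 288*α*t^2 + 864) / (t^4*(12+t^2*α)^4),
      fun t => (-(336*α^3*t^6 + 2880*α^2*t^4 + 17280*α*t^2 + 41472)) / (t^5*(12+t^2*α)^5),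
      ?_, ?_, ?_, ?_⟩ <;>
      intro t ht <;>
      have ht0 : (0:ℝ) < t := ht <;>
      have htne : t ≠ 0 := ne_of_gt ht0 <;>
      have hw : (12 + t^2*α) ≠ 0 := by positivity
    · exact ((hasDerivAt_const t (1:ℝ)).div ((hasDerivAt_pow 2 t).mul ((hq t).pow 2))
        (mul_ne_zero (pow_ne_zero 2 htne) (pow_ne_zero 2 hw))).congr_deriv
        (by simp only [Pi.pow_apply, Pi.mul_apply, Pi.neg_apply, Pi.add_apply, id]; field_simp; ring)
    · exact (((((hasDerivAt_pow 2 t).const_mul (6*α)).add_const 24).neg).div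
        ((hasDerivAt_pow 3 t).mul ((hq t).pow 3))
        (mul_ne_zero (pow_ne_zero 3 htne) (pow_ne_zero 3 hw))).congr_deriv
        (by simp only [Pi.pow_apply, Pi.mul_apply, Pi.neg_apply, Pi.add_apply, id]; field_simp; ring)
    · exact (((((hasDerivAt_pow 4 t).const_mul (42*α^2)).add
        ((hasDerivAt_pow 2 t).const_mul (288*α))).add_const 864).div
        ((hasDerivAt_pow 4 t).mul ((hq t).pow 4))
        (mul_ne_zero (pow_ne_zero 4 htne) (pow_ne_zero 4 hw))).congr_deriv
        (by simp only [Pi.pow_apply, Pi.mul_apply, Pi.neg_apply, Pi.add_apply, id]; field_simp; ring)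
    · field_simp
      ring
  · -- linear independence
    intro c₁ c₂ c₃ h
    have key : ∀ t : ℝ, 0 < t → c₁*t^2 + c₂*t + c₃ = 0 := by
      intro t ht
      have h' := h t ht
      have htne : t ≠ 0 := ne_of_gt ht
      have hw : (12 + t^2*α) ≠ 0 := by positivity
      field_simp at h'
      have h2 : (c₁*t^2 + c₂*t + c₃) * (t*(12+t^2*α)^4) = 0 := by linear_combination (t*(12+t^2*α)^4) * h'
      exact (mul_eq_zero.mp h2).resolve_right (mul_ne_zero htne (pow_ne_zero _ hw))
    have k1 := key 1 one_pos
    have k2 := key 2 two_pos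
    have k3 := key 3 three_pos
    norm_num at k1 k2 k3
    refine ⟨by linarith, by linarith, by linarith⟩
  · -- spanning
    rintro g g' g'' g''' ⟨hg, hg', hg'', hode⟩
    have hP : ∀ t : ℝ, HasDerivAt (fun s : ℝ => α^2*s^6 + 24*α*s^4 + 144*s^2)
        (6*α^2*t^5 + 96*α*t^3 + 288*t) t := fun t =>
      ((((hasDerivAt_pow 6 t).const_mul (α^2)).add ((hasDerivAt_pow 4 t).const_mul (24*α))).add
        ((hasDerivAt_pow 2 t).const_mul 144)).congr_deriv (by push_cast; ring)
    have hP1 : ∀ t : ℝ, HasDerivAt (fun s : ℝ => 6*α^2*s^5 + 96*α*s^3 + 288*s)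
        (30*α^2*t^4 + 288*α*t^2 + 288) t := fun t =>
      ((((hasDerivAt_pow 5 t).const_mul (6*α^2)).add ((hasDerivAt_pow 3 t).const_mul (96*α))).add
        ((hasDerivAt_id t).const_mul 288)).congr_deriv (by push_cast; ring)
    have hP2 : ∀ t : ℝ, HasDerivAt (fun s : ℝ => 30*α^2*s^4 + 288*α*s^2 + 288)
        (120*α^2*t^3 + 576*α*t) t := fun t =>
      ((((hasDerivAt_pow 4 t).const_mul (30*α^2)).add ((hasDerivAt_pow 2 t).const_mul (288*α))).add
        (hasDerivAt_const t 288)).congr_deriv (by push_cast; ring)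
    have hu2 : ∀ t ∈ Set.Ioi (0:ℝ), HasDerivAt
        (fun s => g'' s * (α^2*s^6 + 24*α*s^4 + 144*s^2)
          + 2*(g' s * (6*α^2*s^5 + 96*α*s^3 + 288*s))
          + g s * (30*α^2*s^4 + 288*α*s^2 + 288)) 0 t := by
      intro t ht
      have ht0 : (0:ℝ) < t := ht
      have htne : t ≠ 0 := ne_of_gt ht0
      have hw : (12 + t^2*α) ≠ 0 := by positivity
      have h := hode t ht
      field_simp at h
      have h2 : (g''' t * (α^2*t^6+24*α*t^4+144*t^2) + g'' t * (18*α^2*t^5+288*α*t^3+864*t)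
          + g' t * (90*α^2*t^4+864*α*t^2+864) + g t * (120*α^2*t^3+576*α*t))
          * (t^2*(12+t^2*α)^3) = 0 := by linear_combination (t^2*(12+t^2*α)^3) * h
      have key := (mul_eq_zero.mp h2).resolve_right
        (mul_ne_zero (pow_ne_zero _ htne) (pow_ne_zero _ hw))
      refine ((((hg'' t ht).mul (hP t)).add (((hg' t ht).mul (hP1 t)).const_mul 2)).add
        ((hg t ht).mul (hP2 t))).congr_deriv ?_
      linear_combination key
    have hA := eqOn_const_aux _ hu2
    have hu1 : ∀ t ∈ Set.Ioi (0:ℝ), HasDerivAt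
        (fun s => g' s * (α^2*s^6 + 24*α*s^4 + 144*s^2) + g s * (6*α^2*s^5 + 96*α*s^3 + 288*s)
          - (g'' 1 * (α^2 + 24*α + 144) + 2*(g' 1 * (6*α^2 + 96*α + 288))
              + g 1 * (30*α^2 + 288*α + 288)) * s) 0 t := by
      intro t ht
      have h := hA t ht
      simp only [one_pow, mul_one] at h
      refine ((((hg' t ht).mul (hP t)).add ((hg t ht).mul (hP1 t))).sub
        ((hasDerivAt_id t).const_mul _)).congr_deriv ?_
      linear_combination h
    have hB := eqOn_const_aux _ hu1
    set K := g'' 1 * (α^2 + 24*α + 144) + 2*(g' 1 * (6*α^2 + 96*α + 288))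
        + g 1 * (30*α^2 + 288*α + 288) with hK
    set M := g' 1 * (α^2 + 24*α + 144) + g 1 * (6*α^2 + 96*α + 288) - K with hM
    have hu : ∀ t ∈ Set.Ioi (0:ℝ), HasDerivAt
        (fun s => g s * (α^2*s^6 + 24*α*s^4 + 144*s^2) - (K/2)*s^2 - M*s) 0 t := by
      intro t ht
      have h := hB t ht
      simp only [one_pow, mul_one] at h
      refine (((hg t ht).mul (hP t)).sub ((hasDerivAt_pow 2 t).const_mul (K/2))).sub
        ((hasDerivAt_id t).const_mul M) |>.congr_deriv ?_
      push_cast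
      linear_combination h
    have hC := eqOn_const_aux _ hu
    refine ⟨K/2, M, g 1 * (α^2 + 24*α + 144) - K/2 - M, ?_⟩
    intro t ht
    have h := hC t ht
    simp only [one_pow, mul_one] at h
    have ht0 : (0:ℝ) < t := ht
    have htne : t ≠ 0 := ne_of_gt ht0
    have hw : (12 + t^2*α) ≠ 0 := by positivity
    have hQ : (t^2*(12+t^2*α)^2) ≠ 0 := by positivity
    have hgt : g t = (K/2*t^2 + M*t + (g 1 * (α^2+24*α+144) - K/2 - M))/(t^2*(12+t^2*α)^2) := by
      rw [eq_div_iff hQ]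
      linear_combination h
    rw [hgt]
    field_simp
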